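/- Suppose x̂ minimizes F(u) = ½‖Φu - y‖₂² + λ‖u‖_{2,1} over u ∈ ℝ^{2N}, where y = Φx + w and ‖Φᵀw‖_{∞,1} ≤ λ/2. Let h = x̂ - x. Then ‖Φᵀ Φ h‖_{∞,1} ≤ (3/2)λ. -/

import Mathlib

open scoped BigOperators
open Finset

/-- Euclidean norm of a finite-dimensional real vector. -/
noncomputable def l2 {ι : Type*} [Fintype ι] (x : ι → ℝ) : ℝ :=
  Real.sqrt (∑ j, x j ^ 2)

/-- Euclidean inner product. -/
noncomputable def dot {ι : Type*} [Fintype ι] (x y : ι → ℝ) : ℝ := ∑ j, x j * y j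

/-- Joint magnitude of the `i`-th pair of a vector in `ℝ^{2N}`. -/
noncomputable def jmag {N : ℕ} (x : Fin N ⊕ Fin N → ℝ) (i : Fin N) : ℝ :=
  Real.sqrt (x (Sum.inl i) ^ 2 + x (Sum.inr i) ^ 2)

/-- Mixed ℓ₂/ℓ₁ norm `‖x‖_{2,1}`. -/
noncomputable def n21 {N : ℕ} (x : Fin N ⊕ Fin N → ℝ) : ℝ := ∑ i, jmag x i

/-- Mixed ℓ_∞/ℓ₁ norm `‖x‖_{∞,1}`. -/
noncomputable def ninf1 {N : ℕ} (x : Fin N ⊕ Fin N → ℝ) : ℝ := ⨆ i, jmag x i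

open Classical in
/-- Joint support of a vector in `ℝ^{2N}`. -/
noncomputable def jsupp {N : ℕ} (x : Fin N ⊕ Fin N → ℝ) : Finset (Fin N) :=
  Finset.univ.filter (fun i => x (Sum.inl i) ≠ 0 ∨ x (Sum.inr i) ≠ 0)

/-- Restriction of `x` to the joint-index set `T` (zeroing other pairs). -/
noncomputable def rT {N : ℕ} (T : Finset (Fin N)) (x : Fin N ⊕ Fin N → ℝ) :
    Fin N ⊕ Fin N → ℝ := fun j => if Sum.elim id id j ∈ T then x j else 0

/-- Joint restricted isometry property with sparsity level `S` and constant `σ`. -/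
def JRIP {M N : ℕ} (Φ : Matrix (Fin M) (Fin N ⊕ Fin N) ℝ) (S : ℕ) (σ : ℝ) : Prop :=
  ∀ v : Fin N ⊕ Fin N → ℝ, (jsupp v).card ≤ S →
    (1 - σ) * l2 v ^ 2 ≤ l2 (Φ.mulVec v) ^ 2 ∧ l2 (Φ.mulVec v) ^ 2 ≤ (1 + σ) * l2 v ^ 2

lemma sqrt_pair_add_le (a b c d : ℝ) :
    Real.sqrt ((a+c)^2+(b+d)^2) ≤ Real.sqrt (a^2+b^2) + Real.sqrt (c^2+d^2) := by
  have h1 : (0:ℝ) ≤ a^2+b^2 := by positivity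
  have h2 : (0:ℝ) ≤ c^2+d^2 := by positivity
  have s1 := Real.sq_sqrt h1
  have s2 := Real.sq_sqrt h2
  have n1 := Real.sqrt_nonneg (a^2+b^2)
  have n2 := Real.sqrt_nonneg (c^2+d^2)
  rw [show Real.sqrt (a^2+b^2) + Real.sqrt (c^2+d^2)
      = Real.sqrt ((Real.sqrt (a^2+b^2) + Real.sqrt (c^2+d^2))^2) from
      (Real.sqrt_sq (by positivity)).symm]
  apply Real.sqrt_le_sqrt
  have hcs : a*c + b*d ≤ Real.sqrt (a^2+b^2) * Real.sqrt (c^2+d^2) := by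
    nlinarith [sq_nonneg (a*d - b*c), mul_nonneg n1 n2, sq_nonneg (Real.sqrt (a^2+b^2) * Real.sqrt (c^2+d^2) - (a*c+b*d))]
  nlinarith

lemma jmag_nonneg {N : ℕ} (x : Fin N ⊕ Fin N → ℝ) (i : Fin N) : 0 ≤ jmag x i :=
  Real.sqrt_nonneg _

lemma jmag_add_le {N : ℕ} (x z : Fin N ⊕ Fin N → ℝ) (i : Fin N) :
    jmag (x + z) i ≤ jmag x i + jmag z i := by
  simpa [jmag] using sqrt_pair_add_le (x (Sum.inl i)) (x (Sum.inr i)) (z (Sum.inl i)) (z (Sum.inr i))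

lemma jmag_le_ninf1 {N : ℕ} (x : Fin N ⊕ Fin N → ℝ) (i : Fin N) :
    jmag x i ≤ ninf1 x :=
  le_ciSup (Set.Finite.bddAbove (Set.finite_range _)) i

lemma l2_sq {ι : Type*} [Fintype ι] (x : ι → ℝ) : l2 x ^ 2 = ∑ j, x j ^ 2 :=
  Real.sq_sqrt (by positivity)

lemma key {M N : ℕ} (Φ : Matrix (Fin M) (Fin N ⊕ Fin N) ℝ)
    (xh : Fin N ⊕ Fin N → ℝ) (y : Fin M → ℝ) (lam : ℝ) (hlam : 0 ≤ lam)
    (hmin : ∀ u : Fin N ⊕ Fin N → ℝ,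
      1 / 2 * l2 (Φ.mulVec xh - y) ^ 2 + lam * n21 xh ≤
        1 / 2 * l2 (Φ.mulVec u - y) ^ 2 + lam * n21 u) (i : Fin N) :
    jmag (Φ.transpose.mulVec (Φ.mulVec xh - y)) i ≤ lam := by
  set r : Fin M → ℝ := Φ.mulVec xh - y with hr
  set g : Fin N ⊕ Fin N → ℝ := Φ.transpose.mulVec r with hg
  set g1 := g (Sum.inl i) with hg1
  set g2 := g (Sum.inr i) with hg2
  set m := jmag g i with hm
  have hm0 : 0 ≤ m := Real.sqrt_nonneg _
  rcases eq_or_lt_of_le hm0 with h0 | hmpos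
  · exact le_trans h0.symm.le hlam
  have hm2 : m ^ 2 = g1 ^ 2 + g2 ^ 2 := Real.sq_sqrt (by positivity)
  have hmne : m ≠ 0 := ne_of_gt hmpos
  -- the perturbation direction
  set d : Fin N ⊕ Fin N → ℝ :=
    Sum.elim (fun k => if k = i then g1 / m else 0) (fun k => if k = i then g2 / m else 0) with hd
  set C := l2 (Φ.mulVec d) ^ 2 with hC
  have hC0 : 0 ≤ C := by rw [hC, l2_sq]; positivity
  -- ⟨g, d⟩ = m
  have hdot : dot g d = m := by
    rw [dot, Fintype.sum_sum_type]
    simp only [hd, Sum.elim_inl, Sum.elim_inr, mul_ite, mul_zero]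
    rw [Finset.sum_ite_eq' univ i, Finset.sum_ite_eq' univ i]
    simp only [mem_univ, if_true]
    field_simp
    nlinarith [hm2]
  -- jmag d
  have hjd : ∀ j, jmag d j = if j = i then 1 else 0 := by
    intro j
    by_cases hj : j = i
    · subst hj
      simp only [jmag, hd, Sum.elim_inl, Sum.elim_inr, if_true]
      rw [div_pow, div_pow, ← add_div, ← hm2]
      rw [div_self (by positivity)]
      simp [Real.sqrt_one]
    · simp [jmag, hd, hj]
  -- main estimate for every t > 0
  have hkey : ∀ t : ℝ, 0 < t → m ≤ lam + t * C / 2 := by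
    intro t ht
    set u : Fin N ⊕ Fin N → ℝ := xh - t • d with hu
    have hΦu : ∀ k, (Φ.mulVec u - y) k = r k - t * (Φ.mulVec d) k := by
      intro k
      simp only [hu, Pi.sub_apply, hr, Matrix.mulVec, dotProduct, Pi.smul_apply,
        smul_eq_mul, mul_sub, Finset.sum_sub_distrib, Finset.mul_sum]
      rw [show (∑ j, Φ k j * (t * d j)) = ∑ j, t * (Φ k j * d j) from
        Finset.sum_congr rfl (by intros; ring)]
      ring
    have hl2 : l2 (Φ.mulVec u - y) ^ 2 = l2 r ^ 2 - 2 * t * dot r (Φ.mulVec d) + t ^ 2 * C := by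
      rw [l2_sq, l2_sq, hC, l2_sq, dot]
      calc ∑ k, (Φ.mulVec u - y) k ^ 2
          = ∑ k, (r k ^ 2 - 2 * t * (r k * (Φ.mulVec d) k) + t ^ 2 * (Φ.mulVec d) k ^ 2) := by
            apply Finset.sum_congr rfl; intro k _; rw [hΦu k]; ring
        _ = ∑ k, r k ^ 2 - 2 * t * ∑ k, r k * (Φ.mulVec d) k + t ^ 2 * ∑ k, (Φ.mulVec d) k ^ 2 := by
            rw [Finset.sum_add_distrib, Finset.sum_sub_distrib, ← Finset.mul_sum, ← Finset.mul_sum]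
    have hadj : dot r (Φ.mulVec d) = dot g d := by
      simp only [dot, hg, Matrix.mulVec, dotProduct, Matrix.transpose_apply,
        Finset.mul_sum, Finset.sum_mul]
      rw [Finset.sum_comm]
      apply Finset.sum_congr rfl; intro j _
      apply Finset.sum_congr rfl; intro k _; ring
    -- n21 bound
    have hn21 : n21 u ≤ n21 xh + t := by
      have hb : ∀ j, jmag u j ≤ jmag xh j + t * jmag d j := by
        intro j
        have hsm : jmag (t • d) j = t * jmag d j := by
          simp only [jmag, Pi.smul_apply, smul_eq_mul, mul_pow, ← mul_add]
          rw [Real.sqrt_mul (by positivity), Real.sqrt_sq ht.le]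
        have he2 : u = xh + (-(t • d)) := by rw [hu]; ring
        have hneg : jmag (-(t • d)) j = jmag (t • d) j := by simp [jmag]
        calc jmag u j = jmag (xh + (-(t • d))) j := by rw [he2]
          _ ≤ jmag xh j + jmag (-(t • d)) j := jmag_add_le _ _ j
          _ = jmag xh j + t * jmag d j := by rw [hneg, hsm]
      calc n21 u ≤ ∑ j, (jmag xh j + t * jmag d j) := Finset.sum_le_sum (fun j _ => hb j)
        _ = n21 xh + t * ∑ j, jmag d j := by rw [Finset.sum_add_distrib, ← Finset.mul_sum]; rfl
        _ = n21 xh + t := by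
            rw [show (∑ j, jmag d j) = 1 by
              simp only [hjd]; rw [Finset.sum_ite_eq' univ i]; simp]
            ring
    have := hmin u
    rw [hl2, hadj, hdot] at this
    have h2 : t * m ≤ t * (lam + t * C / 2) := by nlinarith
    exact le_of_mul_le_mul_left h2 ht
  -- conclude m ≤ lam
  by_contra hcon
  push_neg at hcon
  have ht : 0 < (m - lam) / (C + 1) := div_pos (by linarith) (by linarith)
  have := hkey _ ht
  have hC1 : 0 < C + 1 := by linarith
  rw [div_mul_eq_mul_div, div_div] at this
  have h2 : (m - lam) * C / ((C+1) * 2) < m - lam := by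
    rw [div_lt_iff₀ (by positivity)]
    nlinarith
  linarith

theorem stmt6 {M N : ℕ} (Φ : Matrix (Fin M) (Fin N ⊕ Fin N) ℝ)
    (x xh : Fin N ⊕ Fin N → ℝ) (w : Fin M → ℝ) (lam : ℝ) (y : Fin M → ℝ)
    (hy : y = Φ.mulVec x + w)
    (hw : ninf1 (Φ.transpose.mulVec w) ≤ lam / 2)
    (hmin : ∀ u : Fin N ⊕ Fin N → ℝ,
      1 / 2 * l2 (Φ.mulVec xh - y) ^ 2 + lam * n21 xh ≤
        1 / 2 * l2 (Φ.mulVec u - y) ^ 2 + lam * n21 u) :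
    ninf1 (Φ.transpose.mulVec (Φ.mulVec (xh - x))) ≤ 3 / 2 * lam := by
  have hw0 : 0 ≤ ninf1 (Φ.transpose.mulVec w) :=
    Real.iSup_nonneg (fun i => jmag_nonneg _ i)
  have hlam : 0 ≤ lam := by linarith
  have h1 : Φ.mulVec (xh - x) = (Φ.mulVec xh - y) + w := by
    rw [hy, Matrix.mulVec_sub]; abel
  have hsplit : Φ.transpose.mulVec (Φ.mulVec (xh - x)) =
      Φ.transpose.mulVec (Φ.mulVec xh - y) + Φ.transpose.mulVec w := by
    rw [h1, Matrix.mulVec_add]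
  rw [ninf1, hsplit]
  refine Real.iSup_le (fun i => ?_) (by linarith)
  calc jmag (Φ.transpose.mulVec (Φ.mulVec xh - y) + Φ.transpose.mulVec w) i
      ≤ jmag (Φ.transpose.mulVec (Φ.mulVec xh - y)) i + jmag (Φ.transpose.mulVec w) i :=
        jmag_add_le _ _ i
    _ ≤ lam + lam / 2 :=
        add_le_add (key Φ xh y lam hlam hmin i)
          (le_trans (jmag_le_ninf1 _ i) hw)
    _ = 3 / 2 * lam := by ring
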